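/- arXiv:1806.10966 — 4 statements merged into one kernel-verified Lean document; each statement's English description precedes it below -/
import Mathlib

section
/- For each c < 0, there exists a unique b ∈ (0,∞) with σ(b) = c, and this b satisfies b < 1. -/
/-- For each `c < 0` there is a unique `b ∈ (0,∞)` with `σ(b) = c`, and `b < 1`. -/
theorem sigma_unique_preimage_neg (A : ℝ) (hA : 0 < A) (σ : ℝ → ℝ)
    (hσ : ∀ F, 0 < F → σ F = 3 * A * (1 / F ^ 7 - 1 / F ^ 13))
    (c : ℝ) (hc : c < 0) :
    ∃ b : ℝ, 0 < b ∧ σ b = c ∧ b < 1 ∧ ∀ b', 0 < b' → σ b' = c → b' = b := by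
  set f : ℝ → ℝ := fun F => 3 * A * (1 / F ^ 7 - 1 / F ^ 13) with hf
  -- continuity away from 0
  have hcont : ∀ s : Set ℝ, (∀ x ∈ s, x ≠ 0) → ContinuousOn f s := by
    intro s hs
    apply ContinuousOn.mul continuousOn_const
    apply ContinuousOn.sub
    · exact ContinuousOn.div continuousOn_const (Continuous.continuousOn (continuous_pow 7))
        (fun x hx => pow_ne_zero _ (hs x hx))
    · exact ContinuousOn.div continuousOn_const (Continuous.continuousOn (continuous_pow 13))
        (fun x hx => pow_ne_zero _ (hs x hx))
  -- strict monotonicity on (0,1]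
  have hmono : StrictMonoOn f (Set.Ioc (0:ℝ) 1) := by
    apply strictMonoOn_of_deriv_pos (convex_Ioc 0 1)
      (hcont _ (fun x hx => ne_of_gt hx.1))
    intro x hx
    rw [interior_Ioc] at hx
    obtain ⟨hx0, hx1⟩ := hx
    have hx7 : (x:ℝ)^7 ≠ 0 := pow_ne_zero _ (ne_of_gt hx0)
    have hx13 : (x:ℝ)^13 ≠ 0 := pow_ne_zero _ (ne_of_gt hx0)
    have h7 : HasDerivAt (fun y : ℝ => 1 / y ^ 7) (-(7 * x ^ 6) / (x ^ 7) ^ 2) x := by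
      have := (hasDerivAt_pow 7 x).inv hx7
      simp only [one_div]; exact this
    have h13 : HasDerivAt (fun y : ℝ => 1 / y ^ 13) (-(13 * x ^ 12) / (x ^ 13) ^ 2) x := by
      have := (hasDerivAt_pow 13 x).inv hx13
      simp only [one_div]; exact this
    have hfd : HasDerivAt f
        (3 * A * (-(7 * x ^ 6) / (x ^ 7) ^ 2 - -(13 * x ^ 12) / (x ^ 13) ^ 2)) x :=
      (h7.sub h13).const_mul (3 * A)
    rw [hfd.deriv]
    have heq : -(7 * x ^ 6) / (x ^ 7) ^ 2 - -(13 * x ^ 12) / (x ^ 13) ^ 2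
        = (13 - 7 * x ^ 6) / x ^ 14 := by
      field_simp
      ring
    rw [heq]
    have hnum : 0 < 13 - 7 * x ^ 6 := by nlinarith [pow_lt_one₀ (le_of_lt hx0) hx1 (by norm_num : (6:ℕ) ≠ 0)]
    positivity
  -- choose a small a with f a ≤ c
  have hcneg : (0:ℝ) < -c := by linarith
  set a : ℝ := min (1/2) (3 * A / (-2 * c)) with ha
  have ha_pos : 0 < a := by
    apply lt_min (by norm_num)
    apply div_pos (by linarith) (by linarith)
  have ha_half : a ≤ 1/2 := min_le_left _ _
  have ha_le : a ≤ 3 * A / (-2 * c) := min_le_right _ _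
  have ha_le1 : a ≤ 1 := le_trans ha_half (by norm_num)
  have ha_mul : a * (-2 * c) ≤ 3 * A := by
    rw [← le_div_iff₀ (by linarith : (0:ℝ) < -2 * c)]
    exact ha_le
  have ha13_le : a ^ 13 ≤ a := by
    calc a ^ 13 ≤ a ^ 1 := pow_le_pow_of_le_one (le_of_lt ha_pos) ha_le1 (by norm_num)
    _ = a := pow_one a
  have ha13_pos : (0:ℝ) < a ^ 13 := by positivity
  have hfa : f a ≤ c := by
    have heq : f a = 3 * A * (a ^ 6 - 1) / a ^ 13 := by
      simp only [hf]
      field_simp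
    rw [heq, div_le_iff₀ ha13_pos]
    have ha6 : a ^ 6 ≤ (1/2 : ℝ) ^ 6 := pow_le_pow_left₀ (le_of_lt ha_pos) ha_half 6
    nlinarith [mul_le_mul_of_nonpos_left ha13_le (le_of_lt hc)]
  have hf1 : f 1 = 0 := by simp [hf]
  -- IVT
  have hsub : Set.Icc (f a) (f 1) ⊆ f '' Set.Icc a 1 :=
    intermediate_value_Icc ha_le1 (hcont _ (fun x hx => ne_of_gt (lt_of_lt_of_le ha_pos hx.1)))
  have hcmem : c ∈ Set.Icc (f a) (f 1) := by
    rw [hf1]; exact ⟨hfa, le_of_lt hc⟩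
  obtain ⟨b, hb_mem, hb_eq⟩ := hsub hcmem
  have hb_pos : 0 < b := lt_of_lt_of_le ha_pos hb_mem.1
  have hb_lt1 : b < 1 := by
    rcases lt_or_eq_of_le hb_mem.2 with h | h
    · exact h
    · exfalso; rw [h, hf1] at hb_eq; linarith
  refine ⟨b, hb_pos, by rw [hσ b hb_pos]; exact hb_eq, hb_lt1, ?_⟩
  intro b' hb' hσb'
  have hfb' : f b' = c := (hσ b' hb').symm.trans hσb'
  have hb'_le1 : b' ≤ 1 := by
    by_contra h
    push_neg at h
    have h7 : b' ^ 7 ≤ b' ^ 13 := pow_le_pow_right₀ (le_of_lt h) (by norm_num)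
    have : 1 / b' ^ 13 ≤ 1 / b' ^ 7 :=
      one_div_le_one_div_of_le (by positivity) h7
    have : 0 ≤ f b' := by
      simp only [hf]
      nlinarith
    linarith [hfb'.symm ▸ this]
  exact hmono.injOn ⟨hb', hb'_le1⟩ ⟨hb_pos, le_of_lt hb_lt1⟩ (by rw [hfb', hb_eq])
end

section
/- For F₁ < F₂ and F ≥ r* with σ strictly decreasing on [r*, ∞) and chord slopes positive, the chord-slope square roots satisfy s₊(F₁, F) > s₊(F₂, F), where s₊(p, F) = √((σ(p) - σ(F))/(p - F)); consequently the vertical distance d(U₁, U₂) = v₁ - v₂ - (s₊(F₁,F) - s₊(F₂,F))(F - F₁) + s₊(F₂,F)(F₁ - F₂) is negative whenever v₁ < v₂ and F₁ < F₂ < F, so two distinct 2-shock curves from distinct states on W₁(U_l) cannot intersect in the elliptic region. -/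
open Set

lemma aux_d1 (A x : ℝ) (hx : x ≠ 0) :
    HasDerivAt (fun y : ℝ => 3*A*(1/y^7 - 1/y^13)) (3*A*(-7/x^8 + 13/x^14)) x := by
  have h7 : HasDerivAt (fun y : ℝ => y^7) (7*x^6) x := by simpa using hasDerivAt_pow 7 x
  have h13 : HasDerivAt (fun y : ℝ => y^13) (13*x^12) x := by simpa using hasDerivAt_pow 13 x
  have i7 := h7.inv (pow_ne_zero 7 hx)
  have i13 := h13.inv (pow_ne_zero 13 hx)
  have h := (i7.sub i13).const_mul (3*A)
  have hfun : (fun y : ℝ => 3*A*((y^7)⁻¹ - (y^13)⁻¹)) = (fun y : ℝ => 3*A*(1/y^7 - 1/y^13)) := by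
    funext y; rw [one_div, one_div]
  have hval : 3*A*(-(7*x^6)/(x^7)^2 - -(13*x^12)/(x^13)^2) = 3*A*(-7/x^8 + 13/x^14) := by
    field_simp
    ring
  rw [hval] at h
  rw [← hfun]; exact h

lemma aux_d2 (A x : ℝ) (hx : x ≠ 0) :
    HasDerivAt (fun y : ℝ => 3*A*(-7/y^8 + 13/y^14)) (3*A*(56/x^9 - 182/x^15)) x := by
  have h8 : HasDerivAt (fun y : ℝ => y^8) (8*x^7) x := by simpa using hasDerivAt_pow 8 x
  have h14 : HasDerivAt (fun y : ℝ => y^14) (14*x^13) x := by simpa using hasDerivAt_pow 14 x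
  have i8 := (h8.inv (pow_ne_zero 8 hx)).const_mul (-7:ℝ)
  have i14 := (h14.inv (pow_ne_zero 14 hx)).const_mul (13:ℝ)
  have h := (i8.add i14).const_mul (3*A)
  have hfun : (fun y : ℝ => 3*A*((-7)*(y^8)⁻¹ + 13*(y^14)⁻¹)) = (fun y : ℝ => 3*A*(-7/y^8 + 13/y^14)) := by
    funext y; rw [neg_div, ← one_div, ← one_div]; ring
  have hval : 3*A*((-7)*(-(8*x^7)/(x^8)^2) + 13*(-(14*x^13)/(x^14)^2)) = 3*A*(56/x^9 - 182/x^15) := by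
    field_simp
    ring
  rw [hval] at h
  rw [← hfun]; exact h

lemma aux_conc (A : ℝ) (hA : 0 < A) :
    StrictConcaveOn ℝ (Set.Icc 1 (((13:ℝ)/4) ^ ((1:ℝ)/6)))
      (fun x : ℝ => 3*A*(1/x^7 - 1/x^13)) := by
  set c : ℝ := ((13:ℝ)/4) ^ ((1:ℝ)/6) with hc
  have hc6 : c ^ (6:ℕ) = 13/4 := by
    rw [hc, ← Real.rpow_natCast (((13:ℝ)/4) ^ ((1:ℝ)/6)) 6,
      ← Real.rpow_mul (by norm_num : (0:ℝ) ≤ 13/4)]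
    norm_num
  apply strictConcaveOn_of_deriv2_neg (convex_Icc _ _)
  · intro x hx
    have hx0 : x ≠ 0 := by have := hx.1; intro h; rw [h] at this; norm_num at this
    exact (aux_d1 A x hx0).continuousAt.continuousWithinAt
  · intro x hx
    rw [interior_Icc] at hx
    have hx0 : (0:ℝ) < x := lt_trans one_pos hx.1
    have hxne : x ≠ 0 := ne_of_gt hx0
    have hev : deriv (fun y : ℝ => 3*A*(1/y^7 - 1/y^13)) =ᶠ[nhds x]
        (fun y : ℝ => 3*A*(-7/y^8 + 13/y^14)) := by
      filter_upwards [eventually_ne_nhds hxne] with y hy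
      exact (aux_d1 A y hy).deriv
    have hit : deriv^[2] (fun y : ℝ => 3*A*(1/y^7 - 1/y^13)) x
        = deriv (deriv (fun y : ℝ => 3*A*(1/y^7 - 1/y^13))) x := by
      rw [Function.iterate_succ_apply', Function.iterate_one]
    rw [hit, hev.deriv_eq, (aux_d2 A x hxne).deriv]
    have hx6 : x ^ 6 < 13/4 := by
      calc x ^ 6 < c ^ 6 := by
            exact pow_lt_pow_left₀ hx.2 (le_of_lt hx0) (by norm_num)
        _ = 13/4 := hc6
    have hneg : 56/x^9 - 182/x^15 < 0 := by
      rw [sub_neg, div_lt_div_iff₀ (by positivity) (by positivity)]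
      nlinarith [pow_pos hx0 9, mul_lt_mul_of_pos_right hx6 (pow_pos hx0 9)]
    have h3A : 0 < 3*A := by linarith
    exact mul_neg_of_pos_of_neg h3A hneg

lemma aux_anti (A : ℝ) (hA : 0 < A) :
    StrictAntiOn (fun x : ℝ => 3*A*(1/x^7 - 1/x^13))
      (Set.Ici (((13:ℝ)/7) ^ ((1:ℝ)/6))) := by
  set r : ℝ := ((13:ℝ)/7) ^ ((1:ℝ)/6) with hrr
  have hr1 : (1:ℝ) < r := by
    rw [hrr]
    exact (Real.one_lt_rpow_iff_of_pos (by norm_num)).mpr (Or.inl ⟨by norm_num, by norm_num⟩)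
  have hr6 : r ^ (6:ℕ) = 13/7 := by
    rw [hrr, ← Real.rpow_natCast (((13:ℝ)/7) ^ ((1:ℝ)/6)) 6,
      ← Real.rpow_mul (by norm_num : (0:ℝ) ≤ 13/7)]
    norm_num
  apply strictAntiOn_of_deriv_neg (convex_Ici _)
  · intro x hx
    have hx0 : x ≠ 0 := by
      have : (1:ℝ) < x := lt_of_lt_of_le hr1 hx
      intro h; rw [h] at this; norm_num at this
    exact (aux_d1 A x hx0).continuousAt.continuousWithinAt
  · intro x hx
    rw [interior_Ici] at hx
    have hx0 : (0:ℝ) < x := lt_trans one_pos (lt_trans hr1 hx)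
    have hxne : x ≠ 0 := ne_of_gt hx0
    rw [(aux_d1 A x hxne).deriv]
    have hx6 : 13/7 < x ^ 6 := by
      calc (13:ℝ)/7 = r ^ 6 := hr6.symm
        _ < x ^ 6 := pow_lt_pow_left₀ hx (by linarith) (by norm_num)
    have hneg : -7/x^8 + 13/x^14 < 0 := by
      have h2 : 13/x^14 < 7/x^8 := by
        rw [div_lt_div_iff₀ (by positivity) (by positivity)]
        nlinarith [mul_lt_mul_of_pos_right hx6 (pow_pos hx0 8)]
      rw [neg_div]
      linarith
    have h3A : 0 < 3*A := by linarith
    exact mul_neg_of_pos_of_neg h3A hneg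


/-- For `1 ≤ F₁ < F₂ < F` with `F ≥ r*` and `σ` strictly decreasing on `[r*,∞)`,
the chord-slope square roots `s₊(p,F) = √((σ(p)-σ(F))/(p-F))` satisfy
`s₊(F₁,F) > s₊(F₂,F)`; consequently, if `v₁ < v₂`, the vertical distance
`d(U₁,U₂) = v₁ - v₂ - (s₊(F₁,F) - s₊(F₂,F))(F - F₁) + s₊(F₂,F)(F₁ - F₂)`
is negative, so two 2-shock curves cannot intersect in the elliptic region. -/
theorem no_self_intersection (A : ℝ) (hA : 0 < A) (σ : ℝ → ℝ)
    (hσ : ∀ F, 0 < F → σ F = 3 * A * (1 / F ^ 7 - 1 / F ^ 13))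
    (rstar : ℝ) (hr : rstar = (13 / 7 : ℝ) ^ ((1 : ℝ) / 6))
    (F₁ F₂ F v₁ v₂ : ℝ)
    (h1 : 1 ≤ F₁) (h12 : F₁ < F₂) (h2F : F₂ < F) (hF : rstar ≤ F)
    (hv : v₁ < v₂)
    (hs1 : 0 < (σ F₁ - σ F) / (F₁ - F)) (hs2 : 0 < (σ F₂ - σ F) / (F₂ - F)) :
    Real.sqrt ((σ F₂ - σ F) / (F₂ - F)) < Real.sqrt ((σ F₁ - σ F) / (F₁ - F)) ∧
    v₁ - v₂ -
        (Real.sqrt ((σ F₁ - σ F) / (F₁ - F)) -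
          Real.sqrt ((σ F₂ - σ F) / (F₂ - F))) * (F - F₁) +
        Real.sqrt ((σ F₂ - σ F) / (F₂ - F)) * (F₁ - F₂) < 0 := by
  set c : ℝ := ((13:ℝ)/4) ^ ((1:ℝ)/6) with hc
  have hr1 : (1:ℝ) < rstar := by
    rw [hr]
    exact (Real.one_lt_rpow_iff_of_pos (by norm_num)).mpr (Or.inl ⟨by norm_num, by norm_num⟩)
  -- rstar < c
  have hr6 : rstar ^ (6:ℕ) = 13/7 := by
    rw [hr, ← Real.rpow_natCast (((13:ℝ)/7) ^ ((1:ℝ)/6)) 6,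
      ← Real.rpow_mul (by norm_num : (0:ℝ) ≤ 13/7)]
    norm_num
  have hc6 : c ^ (6:ℕ) = 13/4 := by
    rw [hc, ← Real.rpow_natCast (((13:ℝ)/4) ^ ((1:ℝ)/6)) 6,
      ← Real.rpow_mul (by norm_num : (0:ℝ) ≤ 13/4)]
    norm_num
  have hrc : rstar < c := by
    apply lt_of_pow_lt_pow_left₀ 6 (by rw [hc]; positivity)
    rw [hr6, hc6]; norm_num
  have hanti := aux_anti A hA
  rw [← hr] at hanti
  have hconc := aux_conc A hA
  rw [← hc] at hconc
  have fanti : ∀ a b : ℝ, rstar ≤ a → rstar ≤ b → a < b → σ b < σ a := by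
    intro a b ha hb hab
    rw [hσ a (by linarith), hσ b (by linarith)]
    exact hanti (Set.mem_Ici.mpr ha) (Set.mem_Ici.mpr hb) hab
  -- numerator signs from the positivity of the chord slopes
  have hn1 : σ F₁ < σ F := by
    rcases div_pos_iff.mp hs1 with ⟨ha, hb⟩ | ⟨ha, hb⟩ <;> linarith
  have hn2 : σ F₂ < σ F := by
    rcases div_pos_iff.mp hs2 with ⟨ha, hb⟩ | ⟨ha, hb⟩ <;> linarith
  -- F₂ lies strictly below rstar
  have h2r : F₂ < rstar := by
    by_contra hcon
    push_neg at hcon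
    have := fanti F₂ F hcon hF h2F
    linarith
  have fslope : ∀ z : ℝ, z ≤ c → F₂ < z →
      (σ z - σ F₂)/(z - F₂) < (σ F₂ - σ F₁)/(F₂ - F₁) := by
    intro z hz h2z
    rw [hσ z (by linarith), hσ F₂ (by linarith), hσ F₁ (by linarith)]
    exact hconc.slope_anti_adjacent ⟨h1, by linarith⟩ ⟨by linarith, hz⟩ h12 h2z
  -- the key secant-slope inequality
  have key : (σ F - σ F₂)/(F - F₂) < (σ F₂ - σ F₁)/(F₂ - F₁) := by
    rcases le_or_gt F c with hFc | hFc
    · exact fslope F hFc h2F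
    · have step2 := fslope c (le_refl c) (by linarith)
      have hfc : σ F < σ c := fanti c F (le_of_lt hrc) hF hFc
      have hb2 : (0:ℝ) < c - F₂ := by linarith
      have hbF : (0:ℝ) < F - F₂ := by linarith
      have step1 : (σ F - σ F₂)/(F - F₂) < (σ c - σ F₂)/(c - F₂) := by
        rw [div_lt_div_iff₀ hbF hb2]
        nlinarith
      linarith
  have hb1 : (0:ℝ) < F - F₁ := by linarith
  have hb2 : (0:ℝ) < F - F₂ := by linarith
  have hb12 : (0:ℝ) < F₂ - F₁ := by linarith
  have key' : (σ F - σ F₂) * (F₂ - F₁) < (σ F₂ - σ F₁) * (F - F₂) := by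
    rw [div_lt_div_iff₀ hb2 hb12] at key
    linarith
  have goal1 : (σ F₂ - σ F)/(F₂ - F) < (σ F₁ - σ F)/(F₁ - F) := by
    have e1 : (σ F₁ - σ F)/(F₁ - F) = (σ F - σ F₁)/(F - F₁) := by
      rw [show σ F₁ - σ F = -(σ F - σ F₁) by ring,
        show F₁ - F = -(F - F₁) by ring, neg_div_neg_eq]
    have e2 : (σ F₂ - σ F)/(F₂ - F) = (σ F - σ F₂)/(F - F₂) := by
      rw [show σ F₂ - σ F = -(σ F - σ F₂) by ring,
        show F₂ - F = -(F - F₂) by ring, neg_div_neg_eq]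
    rw [e1, e2, div_lt_div_iff₀ hb2 hb1]
    nlinarith [key']
  have hsq : Real.sqrt ((σ F₂ - σ F)/(F₂ - F)) < Real.sqrt ((σ F₁ - σ F)/(F₁ - F)) :=
    Real.sqrt_lt_sqrt (le_of_lt hs2) goal1
  refine ⟨hsq, ?_⟩
  have hp2 : 0 < Real.sqrt ((σ F₂ - σ F)/(F₂ - F)) := Real.sqrt_pos.mpr hs2
  nlinarith [mul_pos (sub_pos.mpr hsq) hb1, mul_pos hp2 hb12]
end

section
/- For the viscous semi-discrete system ρ₀ φ_j'' = (1/ΔX)[σ((φ_{j+1}-φ_j)/ΔX) - σ((φ_j - φ_{j-1})/ΔX)] + μ d/dt[(φ_{j+1} - 2φ_j + φ_{j-1})/ΔX²], with μ > 0 and fixed boundary values φ₀ = 0, φ_M = a, the discrete energy E^d satisfies d/dt E^d = -(μ/M)Σ_{j=1}^{M} [d/dt((φ_j - φ_{j-1})/ΔX)]² ≤ 0, so E^d is nonincreasing in t. -/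
private lemma sbp_aux (f A : ℕ → ℝ) (N : ℕ) :
    ∑ j ∈ Finset.Icc 1 N, f j * (A (j + 1) - A j)
      + ∑ j ∈ Finset.Icc 1 N, (f j - f (j - 1)) * A j
      = f N * A (N + 1) - f 0 * A 1 := by
  induction N with
  | zero => simp
  | succ n ih =>
    rw [Finset.sum_Icc_succ_top (by omega), Finset.sum_Icc_succ_top (by omega)]
    have hn : n + 1 - 1 = n := rfl
    rw [hn]
    linear_combination ih

private lemma sbp (f A : ℕ → ℝ) (M : ℕ) (hM : 2 ≤ M)
    (h0 : f 0 = 0) (hMv : f M = 0) :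
    ∑ j ∈ Finset.Icc 1 (M - 1), f j * (A (j + 1) - A j)
      = - ∑ j ∈ Finset.Icc 1 M, (f j - f (j - 1)) * A j := by
  have hM1 : M - 1 + 1 = M := by omega
  have h1 := sbp_aux f A (M - 1)
  rw [hM1, h0] at h1
  have h2 : ∑ j ∈ Finset.Icc 1 M, (f j - f (j - 1)) * A j
      = ∑ j ∈ Finset.Icc 1 (M - 1), (f j - f (j - 1)) * A j
        + (f M - f (M - 1)) * A M := by
    rw [← hM1, Finset.sum_Icc_succ_top (by omega)]
    rw [hM1]
  rw [hMv] at h2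
  linarith

/-- For the viscous semi-discrete chain
`ρ₀ φ_j'' = (1/ΔX)[σ((φ_{j+1}-φ_j)/ΔX) - σ((φ_j-φ_{j-1})/ΔX)]
  + μ d/dt[(φ_{j+1}-2φ_j+φ_{j-1})/ΔX²]`
with `μ > 0` and fixed boundary values, the discrete energy satisfies
`d/dt E^d = -(μ/M) Σ_{j=1}^{M} [d/dt((φ_j-φ_{j-1})/ΔX)]² ≤ 0`. -/
theorem discrete_energy_dissipation (ρ₀ μ a ΔX : ℝ) (M : ℕ) (hρ : 0 < ρ₀)
    (hμ : 0 < μ) (hM : 2 ≤ M) (hΔX : ΔX = 1 / M)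
    (Θ σ : ℝ → ℝ) (hΘ : ∀ x, 0 < x → HasDerivAt Θ (σ x) x)
    (φ φ' φ'' : ℕ → ℝ → ℝ)
    (hφ' : ∀ j t, HasDerivAt (φ j) (φ' j t) t)
    (hφ'' : ∀ j t, HasDerivAt (φ' j) (φ'' j t) t)
    (hbc0 : ∀ t, φ 0 t = 0) (hbcM : ∀ t, φ M t = a)
    (hpos : ∀ j, 1 ≤ j → j ≤ M → ∀ t, 0 < φ j t - φ (j - 1) t)
    (hode : ∀ j, 1 ≤ j → j ≤ M - 1 → ∀ t,
      ρ₀ * φ'' j t =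
        (1 / ΔX) * (σ ((φ (j + 1) t - φ j t) / ΔX)
          - σ ((φ j t - φ (j - 1) t) / ΔX))
        + μ * ((φ' (j + 1) t - 2 * φ' j t + φ' (j - 1) t) / ΔX ^ 2))
    (E : ℝ → ℝ)
    (hE : ∀ t, E t = ρ₀ / (2 * M) * ∑ j ∈ Finset.Icc 1 (M - 1), (φ' j t) ^ 2
        + (1 / M) * ∑ j ∈ Finset.Icc 1 M, Θ ((φ j t - φ (j - 1) t) / ΔX)) :
    ∀ t, HasDerivAt E
        (-(μ / M) * ∑ j ∈ Finset.Icc 1 M, ((φ' j t - φ' (j - 1) t) / ΔX) ^ 2) t ∧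
      -(μ / M) * ∑ j ∈ Finset.Icc 1 M, ((φ' j t - φ' (j - 1) t) / ΔX) ^ 2 ≤ 0 := by
  have hMpos : (0:ℝ) < (M:ℝ) := by
    have : (2:ℝ) ≤ M := by exact_mod_cast hM
    linarith
  have hΔXpos : 0 < ΔX := by rw [hΔX]; positivity
  have hΔXne : ΔX ≠ 0 := ne_of_gt hΔXpos
  have hMne : (M:ℝ) ≠ 0 := ne_of_gt hMpos
  -- boundary velocities vanish
  have hφ0 : φ 0 = fun _ => (0:ℝ) := funext hbc0
  have hφM : φ M = fun _ => a := funext hbcM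
  have hv0 : ∀ t, φ' 0 t = 0 := by
    intro t
    have h := hφ' 0 t
    rw [hφ0] at h
    exact h.unique (hasDerivAt_const t 0)
  have hvM : ∀ t, φ' M t = 0 := by
    intro t
    have h := hφ' M t
    rw [hφM] at h
    exact h.unique (hasDerivAt_const t a)
  intro t
  constructor
  · -- derivative computation
    rw [show E = fun t => ρ₀ / (2 * M) * ∑ j ∈ Finset.Icc 1 (M - 1), (φ' j t) ^ 2
        + (1 / M) * ∑ j ∈ Finset.Icc 1 M, Θ ((φ j t - φ (j - 1) t) / ΔX) from funext hE]
    have hsum1 : HasDerivAt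
        (fun t => ∑ j ∈ Finset.Icc 1 (M - 1), (φ' j t) ^ 2)
        (∑ j ∈ Finset.Icc 1 (M - 1), 2 * φ' j t * φ'' j t) t := by
      refine HasDerivAt.fun_sum fun j _ => ?_
      have h := (hφ'' j t).fun_pow 2
      simpa using h
    have hsum2 : HasDerivAt
        (fun t => ∑ j ∈ Finset.Icc 1 M, Θ ((φ j t - φ (j - 1) t) / ΔX))
        (∑ j ∈ Finset.Icc 1 M, σ ((φ j t - φ (j - 1) t) / ΔX)
          * ((φ' j t - φ' (j - 1) t) / ΔX)) t := by
      refine HasDerivAt.fun_sum fun j hj => ?_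
      rw [Finset.mem_Icc] at hj
      have hg : HasDerivAt (fun t => (φ j t - φ (j - 1) t) / ΔX)
          ((φ' j t - φ' (j - 1) t) / ΔX) t :=
        ((hφ' j t).sub (hφ' (j - 1) t)).div_const ΔX
      have hx : 0 < (φ j t - φ (j - 1) t) / ΔX :=
        div_pos (hpos j hj.1 hj.2 t) hΔXpos
      exact (hΘ _ hx).comp t hg
    have hD := (hsum1.const_mul (ρ₀ / (2 * M))).add (hsum2.const_mul (1 / (M:ℝ)))
    have hval : ρ₀ / (2 * (M:ℝ)) * ∑ j ∈ Finset.Icc 1 (M - 1), 2 * φ' j t * φ'' j t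
        + 1 / (M:ℝ) * ∑ j ∈ Finset.Icc 1 M, σ ((φ j t - φ (j - 1) t) / ΔX)
            * ((φ' j t - φ' (j - 1) t) / ΔX)
        = -(μ / M) * ∑ j ∈ Finset.Icc 1 M, ((φ' j t - φ' (j - 1) t) / ΔX) ^ 2 := by
      set f : ℕ → ℝ := fun j => φ' j t with hf
      set A : ℕ → ℝ := fun j => σ ((φ j t - φ (j - 1) t) / ΔX)
        + μ * ((φ' j t - φ' (j - 1) t) / ΔX) with hA
      have hpart := sbp f A M hM (hv0 t) (hvM t)
      have hAd : ∀ j ∈ Finset.Icc 1 (M - 1), A (j + 1) - A j = ΔX * (ρ₀ * φ'' j t) := by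
        intro j hj
        rw [Finset.mem_Icc] at hj
        have hode' := hode j hj.1 hj.2 t
        have hidx : j + 1 - 1 = j := rfl
        simp only [hA, hidx]
        rw [hode']
        field_simp
        ring
      have hterm : ∀ j ∈ Finset.Icc 1 (M - 1),
          ρ₀ / (2 * (M:ℝ)) * (2 * φ' j t * φ'' j t)
            = 1 / (M:ℝ) * (f j * (A (j + 1) - A j)) / ΔX := by
        intro j hj
        rw [hAd j hj]
        simp only [hf]
        field_simp
      have e1 : ρ₀ / (2 * (M:ℝ)) * ∑ j ∈ Finset.Icc 1 (M - 1), 2 * φ' j t * φ'' j t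
          = 1 / (M:ℝ) * (- ∑ j ∈ Finset.Icc 1 M, (f j - f (j - 1)) * A j) / ΔX := by
        rw [Finset.mul_sum, Finset.sum_congr rfl hterm, ← Finset.sum_div,
          ← Finset.mul_sum, hpart]
      have key : (1 / (M:ℝ)) * ∑ j ∈ Finset.Icc 1 M,
          (-((f j - f (j - 1)) * A j) / ΔX
            + σ ((φ j t - φ (j - 1) t) / ΔX) * ((φ' j t - φ' (j - 1) t) / ΔX))
          = -(μ / M) * ∑ j ∈ Finset.Icc 1 M, ((φ' j t - φ' (j - 1) t) / ΔX) ^ 2 := by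
        rw [Finset.mul_sum, Finset.mul_sum]
        refine Finset.sum_congr rfl fun j _ => ?_
        simp only [hA, hf]
        field_simp
        ring
      have e3 : ∑ j ∈ Finset.Icc 1 M,
          (-((f j - f (j - 1)) * A j) / ΔX
            + σ ((φ j t - φ (j - 1) t) / ΔX) * ((φ' j t - φ' (j - 1) t) / ΔX))
          = (- ∑ j ∈ Finset.Icc 1 M, (f j - f (j - 1)) * A j) / ΔX
            + ∑ j ∈ Finset.Icc 1 M, σ ((φ j t - φ (j - 1) t) / ΔX)
                * ((φ' j t - φ' (j - 1) t) / ΔX) := by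
        rw [Finset.sum_add_distrib, ← Finset.sum_div, ← Finset.sum_neg_distrib]
      rw [e3] at key
      rw [e1]
      linear_combination key
    rw [← hval]
    exact hD
  · -- sign
    have hsum : 0 ≤ ∑ j ∈ Finset.Icc 1 M, ((φ' j t - φ' (j - 1) t) / ΔX) ^ 2 :=
      Finset.sum_nonneg fun j _ => sq_nonneg _
    have hc : 0 ≤ μ / M := le_of_lt (div_pos hμ hMpos)
    nlinarith
end

section
/- If a C¹ solution of the semi-discrete chain satisfies the energy bound E^d(φ(t), φ'(t)) ≤ E⁰ for all t, and the potential Θ satisfies Θ(F) → +∞ as F → 0⁺, then the particle positions never cross: φ_{j-1}(t) < φ_j(t) for all j and all t; consequently 0 ≤ φ_j(t) ≤ a and ‖φ'(t)‖₂² ≤ (2/ρ₀)(E⁰ + |Θ_min|), where Θ_min is the minimum of Θ and ‖φ'‖₂² = (1/M)Σ_{j=1}^{M-1}(φ_j')². -/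
open Filter

/-- If a C¹ solution of the semi-discrete chain satisfies the energy bound
`E^d(t) ≤ E0` for all `t ≥ 0` and `Θ(F) → +∞` as `F → 0⁺`, then the particles
never cross: `φ_{j-1}(t) < φ_j(t)`; consequently `0 ≤ φ_j(t) ≤ a` and
`‖φ'(t)‖₂² ≤ (2/ρ₀)(E0 + |Θ_min|)`. -/
theorem no_crossing_and_bounds (ρ₀ a ΔX E0 Θmin : ℝ) (M : ℕ) (hρ : 0 < ρ₀)
    (ha : 0 < a) (hM : 2 ≤ M) (hΔX : ΔX = 1 / M)
    (Θ : ℝ → ℝ) (hΘc : ContinuousOn Θ (Set.Ioi 0))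
    (hΘmin : ∀ x, 0 < x → Θmin ≤ Θ x)
    (hΘblow : Tendsto Θ (nhdsWithin 0 (Set.Ioi 0)) atTop)
    (φ φ' : ℕ → ℝ → ℝ)
    (hφ' : ∀ j t, HasDerivAt (φ j) (φ' j t) t)
    (hbc0 : ∀ t, φ 0 t = 0) (hbcM : ∀ t, φ M t = a)
    (hinit : ∀ j, 1 ≤ j → j ≤ M → φ (j - 1) 0 < φ j 0)
    (E : ℝ → ℝ)
    (hE : ∀ t, E t = ρ₀ / (2 * M) * ∑ j ∈ Finset.Icc 1 (M - 1), (φ' j t) ^ 2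
        + (1 / M) * ∑ j ∈ Finset.Icc 1 M, Θ ((φ j t - φ (j - 1) t) / ΔX))
    (hEbound : ∀ t, 0 ≤ t → E t ≤ E0) :
    ∀ t, 0 ≤ t →
      (∀ j, 1 ≤ j → j ≤ M → φ (j - 1) t < φ j t) ∧
      (∀ j, j ≤ M → 0 ≤ φ j t ∧ φ j t ≤ a) ∧
      (1 / M) * ∑ j ∈ Finset.Icc 1 (M - 1), (φ' j t) ^ 2
        ≤ 2 / ρ₀ * (E0 + |Θmin|) := by
  have hMpos : (0:ℝ) < M := by exact_mod_cast Nat.lt_of_lt_of_le (by norm_num) hM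
  have hΔXpos : 0 < ΔX := by rw [hΔX]; positivity
  -- the blow-up bound
  set B : ℝ := M * E0 - ((M:ℝ) - 1) * Θmin with hBdef
  obtain ⟨δ, hδpos, hδ⟩ : ∃ δ > 0, ∀ F : ℝ, 0 < F → F < δ → B < Θ F := by
    have h := hΘblow.eventually (eventually_gt_atTop B)
    rw [eventually_nhdsWithin_iff, Metric.eventually_nhds_iff] at h
    obtain ⟨ε, hε, hε'⟩ := h
    exact ⟨ε, hε, fun F hF hFε => hε' (by simpa [Real.dist_eq, abs_of_pos hF] using hFε) hF⟩
  -- energy control: if all gaps are positive at time `t ≥ 0`, they are ≥ δ·ΔX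
  have keyA : ∀ t, 0 ≤ t → (∀ j, 1 ≤ j → j ≤ M → 0 < φ j t - φ (j-1) t) →
      ∀ k, 1 ≤ k → k ≤ M → δ * ΔX ≤ φ k t - φ (k-1) t := by
    intro t ht hpos k hk1 hkM
    by_contra hcon
    push_neg at hcon
    have hgapk : 0 < φ k t - φ (k-1) t := hpos k hk1 hkM
    have hFpos : 0 < (φ k t - φ (k-1) t) / ΔX := by positivity
    have hFδ : (φ k t - φ (k-1) t) / ΔX < δ := by
      rw [div_lt_iff₀ hΔXpos]
      linarith
    have hΘB : B < Θ ((φ k t - φ (k-1) t) / ΔX) := hδ _ hFpos hFδ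
    -- now derive Θ ≤ B from the energy bound
    have hEt := hEbound t ht
    rw [hE t] at hEt
    set K := ∑ j ∈ Finset.Icc 1 (M - 1), (φ' j t) ^ 2 with hKdef
    set S := ∑ j ∈ Finset.Icc 1 M, Θ ((φ j t - φ (j - 1) t) / ΔX) with hSdef
    have hK0 : 0 ≤ ρ₀ / (2 * M) * K := by positivity
    have hSM : (1 / (M:ℝ)) * S ≤ E0 := by linarith
    have hSE : S ≤ M * E0 := by
      rw [one_div_mul_eq_div, div_le_iff₀ hMpos] at hSM
      linarith [hSM]
    have hkmem : k ∈ Finset.Icc 1 M := Finset.mem_Icc.mpr ⟨hk1, hkM⟩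
    have hsplit : Θ ((φ k t - φ (k-1) t) / ΔX) + ((M:ℝ) - 1) * Θmin ≤ S := by
      rw [hSdef, ← Finset.add_sum_erase _ _ hkmem]
      have hrest : ((M:ℝ) - 1) * Θmin ≤
          ∑ j ∈ (Finset.Icc 1 M).erase k, Θ ((φ j t - φ (j - 1) t) / ΔX) := by
        have hcard : ((Finset.Icc 1 M).erase k).card = M - 1 := by
          rw [Finset.card_erase_of_mem hkmem, Nat.card_Icc]
          omega
        have h := Finset.card_nsmul_le_sum ((Finset.Icc 1 M).erase k)
          (fun j => Θ ((φ j t - φ (j - 1) t) / ΔX)) Θmin ?_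
        · rw [hcard, nsmul_eq_mul, Nat.cast_sub (by omega), Nat.cast_one] at h
          exact h
        · intro j hj
          obtain ⟨-, hj2⟩ := Finset.mem_erase.mp hj
          obtain ⟨hj1, hjM⟩ := Finset.mem_Icc.mp hj2
          exact hΘmin _ (by have := hpos j hj1 hjM; positivity)
      linarith
    linarith
  -- the minimal-gap function
  have hne : (Finset.Icc 1 M).Nonempty := ⟨1, Finset.mem_Icc.mpr ⟨le_refl 1, by omega⟩⟩
  set g : ℝ → ℝ := fun t => (Finset.Icc 1 M).inf' hne (fun j => φ j t - φ (j-1) t) with hgdef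
  have hgc : Continuous g := by
    apply Continuous.finset_inf'_apply hne
    intro i _
    have h1 : Continuous (φ i) := by
      rw [continuous_iff_continuousAt]; exact fun t => (hφ' i t).continuousAt
    have h2 : Continuous (φ (i-1)) := by
      rw [continuous_iff_continuousAt]; exact fun t => (hφ' (i-1) t).continuousAt
    exact h1.sub h2
  have hg_le : ∀ t j, 1 ≤ j → j ≤ M → g t ≤ φ j t - φ (j-1) t := by
    intro t j hj1 hjM
    exact Finset.inf'_le _ (Finset.mem_Icc.mpr ⟨hj1, hjM⟩)
  have hle_g : ∀ (t : ℝ) (c : ℝ), (∀ j, 1 ≤ j → j ≤ M → c ≤ φ j t - φ (j-1) t) → c ≤ g t := by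
    intro t c hc
    apply Finset.le_inf'
    intro j hj
    obtain ⟨hj1, hjM⟩ := Finset.mem_Icc.mp hj
    exact hc j hj1 hjM
  -- from keyA: at any `t ≥ 0`, if `g t > 0` then `g t ≥ δ ΔX`
  have keyB : ∀ t, 0 ≤ t → 0 < g t → δ * ΔX ≤ g t := by
    intro t ht hgt
    apply hle_g
    apply keyA t ht
    intro j hj1 hjM
    exact lt_of_lt_of_le hgt (hg_le t j hj1 hjM)
  have hg0 : 0 < g 0 := by
    apply lt_of_lt_of_le _ (hle_g 0 ((Finset.Icc 1 M).inf' hne (fun j => φ j 0 - φ (j-1) 0))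
      (fun j hj1 hjM => Finset.inf'_le _ (Finset.mem_Icc.mpr ⟨hj1, hjM⟩)))
    obtain ⟨j, hj, hjeq⟩ := Finset.exists_mem_eq_inf' hne (fun j => φ j 0 - φ (j-1) 0)
    obtain ⟨hj1, hjM⟩ := Finset.mem_Icc.mp hj
    rw [hjeq]
    have := hinit j hj1 hjM
    linarith
  -- main continuity argument: g t ≥ δ ΔX for all t ≥ 0
  have main : ∀ t, 0 ≤ t → δ * ΔX ≤ g t := by
    intro t ht
    by_contra hcon
    push_neg at hcon
    have hg0' : δ * ΔX ≤ g 0 := keyB 0 le_rfl hg0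
    have hgt_le : g t ≤ 0 := by
      by_contra h
      push_neg at h
      exact absurd (keyB t ht h) (not_le.mpr hcon)
    have hδΔX : 0 < δ * ΔX := by positivity
    have ht0 : (0:ℝ) < t := by
      rcases lt_or_eq_of_le ht with h | h
      · exact h
      · exfalso; rw [← h] at hgt_le; linarith
    have hmem : δ * ΔX / 2 ∈ Set.Icc (g t) (g 0) := ⟨by linarith, by linarith⟩
    obtain ⟨s, hs, hgs⟩ := intermediate_value_Icc' (le_of_lt ht0) hgc.continuousOn hmem
    have hs0 : 0 ≤ s := hs.1
    have hgspos : 0 < g s := by rw [hgs]; positivity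
    have := keyB s hs0 hgspos
    rw [hgs] at this
    linarith
  -- conclusions
  intro t ht
  have hgaps : ∀ j, 1 ≤ j → j ≤ M → φ (j - 1) t < φ j t := by
    intro j hj1 hjM
    have h1 := le_trans (main t ht) (hg_le t j hj1 hjM)
    have : 0 < φ j t - φ (j-1) t := lt_of_lt_of_le (by positivity) h1
    linarith
  refine ⟨hgaps, ?_, ?_⟩
  · -- 0 ≤ φ j t ≤ a
    have hmono : ∀ j, j ≤ M → ∀ i, i ≤ j → φ i t ≤ φ j t := by
      intro j
      induction j with
      | zero => intro _ i hi; interval_cases i; exact le_rfl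
      | succ n ih =>
        intro hn1 i hi
        rcases Nat.lt_or_ge i (n+1) with h | h
        · have h1 : φ i t ≤ φ n t := ih (by omega) i (by omega)
          have h2 := hgaps (n+1) (by omega) hn1
          simp only [Nat.add_sub_cancel] at h2
          linarith
        · have : i = n + 1 := by omega
          rw [this]
    intro j hjM
    constructor
    · have := hmono j hjM 0 (Nat.zero_le j)
      rw [hbc0 t] at this; exact this
    · have := hmono M le_rfl j hjM
      rw [hbcM t] at this; exact this
  · -- kinetic energy bound
    have hEt := hEbound t ht
    rw [hE t] at hEt
    set K := ∑ j ∈ Finset.Icc 1 (M - 1), (φ' j t) ^ 2 with hKdef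
    set S := ∑ j ∈ Finset.Icc 1 M, Θ ((φ j t - φ (j - 1) t) / ΔX) with hSdef
    have hSlb : (M:ℝ) * Θmin ≤ S := by
      have h := Finset.card_nsmul_le_sum (Finset.Icc 1 M)
        (fun j => Θ ((φ j t - φ (j - 1) t) / ΔX)) Θmin ?_
      · rw [Nat.card_Icc, nsmul_eq_mul] at h
        simpa using h
      · intro j hj
        obtain ⟨hj1, hjM⟩ := Finset.mem_Icc.mp hj
        have := hgaps j hj1 hjM
        exact hΘmin _ (div_pos (by linarith) hΔXpos)
    have hΘabs : Θmin ≥ -|Θmin| := neg_abs_le Θmin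
    have hSlb2 : -|Θmin| ≤ (1 / (M:ℝ)) * S := by
      have h1 : (1 / (M:ℝ)) * ((M:ℝ) * Θmin) ≤ (1 / (M:ℝ)) * S := by
        apply mul_le_mul_of_nonneg_left hSlb (by positivity)
      have h2 : (1 / (M:ℝ)) * ((M:ℝ) * Θmin) = Θmin := by
        field_simp
      linarith
    have hKub : ρ₀ / (2 * M) * K ≤ E0 + |Θmin| := by linarith
    have heq : (1 / (M:ℝ)) * K = (2 / ρ₀) * (ρ₀ / (2 * M) * K) := by
      field_simp
    rw [heq]
    apply mul_le_mul_of_nonneg_left hKub (by positivity)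
end
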